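/- Let p be a generalized local minimum point of the weight function w of a good semigroup S, and let γ = {x^k}_{k=0}^t be any increasing lattice path from 0 to p. Then w(p) = −#{k : 0 ≤ k < t, w(x^{k+1}) = w(x^k) − 1 and w(p − x^k) = w(p − x^{k+1}) − 1}. In particular this count is independent of the chosen path, and w(p) ≤ 0. -/
import Mathlib


open Finset

/-- Lattice points (we work in `ℤ^r`; nonnegativity is imposed via hypotheses). -/
abbrev Pt (r : ℕ) := Fin r → ℤ

/-- The `i`-th standard basis vector. -/
def E {r : ℕ} (i : Fin r) : Pt r := Pi.single i 1

/-- `e_K = ∑_{i ∈ K} e_i`. -/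
def eK {r : ℕ} (K : Finset (Fin r)) : Pt r := ∑ i ∈ K, E i

/-- `Δ̄ᵢ(ℓ) = {s ∈ S : sᵢ = ℓᵢ, sⱼ ≥ ℓⱼ ∀ j ≠ i}`. -/
def DeltaBarI {r : ℕ} (S : Set (Pt r)) (ℓ : Pt r) (i : Fin r) : Set (Pt r) :=
  {s | s ∈ S ∧ s i = ℓ i ∧ ∀ j, j ≠ i → ℓ j ≤ s j}

/-- `Δᵢ(ℓ) = {s ∈ S : sᵢ = ℓᵢ, sⱼ > ℓⱼ ∀ j ≠ i}`. -/
def DeltaI {r : ℕ} (S : Set (Pt r)) (ℓ : Pt r) (i : Fin r) : Set (Pt r) :=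
  {s | s ∈ S ∧ s i = ℓ i ∧ ∀ j, j ≠ i → ℓ j < s j}

/-- `Δ(ℓ) = ∪ᵢ Δᵢ(ℓ)`. -/
def Delta {r : ℕ} (S : Set (Pt r)) (ℓ : Pt r) : Set (Pt r) := ⋃ i, DeltaI S ℓ i

/-- A good (local) semigroup `S ⊂ ℤ_{≥0}^r` with conductor `c`. -/
structure GoodSemigroup (r : ℕ) where
  S : Set (Pt r)
  c : Pt r
  nonneg : ∀ s ∈ S, (0 : Pt r) ≤ s
  zero_mem : (0 : Pt r) ∈ S
  add_mem : ∀ s ∈ S, ∀ t ∈ S, s + t ∈ S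
  coord_zero : ∀ s ∈ S, ∀ i, s i = 0 → s = 0
  min_mem : ∀ s ∈ S, ∀ t ∈ S, s ⊓ t ∈ S
  prop3 : ∀ s ∈ S, ∀ t ∈ S, ∀ i, s i = t i →
    ∃ u ∈ S, s ⊓ t ≤ u ∧ s i < u i ∧ ∀ j, j ≠ i → s j ≠ t j → u j = (s ⊓ t) j
  conductor_nonneg : (0 : Pt r) ≤ c
  conductor_mem : ∀ ℓ : Pt r, c ≤ ℓ → ℓ ∈ S
  conductor_min : ∀ c' : Pt r, 0 ≤ c' → (∀ ℓ, c' ≤ ℓ → ℓ ∈ S) → c ≤ c'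

/-- `h` is the (combinatorial) Hilbert function of the good semigroup `G`. -/
def IsHilbert {r : ℕ} (G : GoodSemigroup r) (h : Pt r → ℤ) : Prop :=
  h 0 = 0 ∧ ∀ ℓ : Pt r, 0 ≤ ℓ → ∀ i : Fin r,
    (h (ℓ + E i) = h ℓ + 1 ↔ (DeltaBarI G.S ℓ i).Nonempty) ∧
    (h (ℓ + E i) = h ℓ ↔ ¬ (DeltaBarI G.S ℓ i).Nonempty)

/-- `w` is the weight function of the good semigroup `G` (i.e. `w(ℓ) = 2h(ℓ) − |ℓ|`),
characterized by `w(0) = 0` and the step property. -/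
def IsWeight {r : ℕ} (G : GoodSemigroup r) (w : Pt r → ℤ) : Prop :=
  w 0 = 0 ∧ ∀ ℓ : Pt r, 0 ≤ ℓ → ∀ i : Fin r,
    (w (ℓ + E i) = w ℓ + 1 ↔ (DeltaBarI G.S ℓ i).Nonempty) ∧
    (w (ℓ + E i) = w ℓ - 1 ↔ ¬ (DeltaBarI G.S ℓ i).Nonempty)

/-- Generalized local minimum point of the weight function. -/
def GLM {r : ℕ} (w : Pt r → ℤ) (p : Pt r) : Prop :=
  0 ≤ p ∧ ∀ i : Fin r, 1 ≤ p i → w p < w (p - E i)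

/-- Local minimum point of the weight function. -/
def LocMin {r : ℕ} (w : Pt r → ℤ) (p : Pt r) : Prop :=
  GLM w p ∧ ∀ i : Fin r, w p < w (p + E i)


lemma E_nonneg {r : ℕ} (i : Fin r) : (0 : Pt r) ≤ E i := by
  intro j
  by_cases h : j = i
  · subst h; simp [E]
  · simp [E, Pi.single_eq_of_ne h]

lemma E_apply_self {r : ℕ} (i : Fin r) : E i i = 1 := by simp [E]

lemma E_apply_ne {r : ℕ} {i j : Fin r} (h : j ≠ i) : E i j = 0 := by
  simp [E, Pi.single_eq_of_ne h]

lemma step_pm {r : ℕ} (G : GoodSemigroup r) (w : Pt r → ℤ) (hw : IsWeight G w)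
    (ℓ : Pt r) (hℓ : 0 ≤ ℓ) (i : Fin r) :
    w (ℓ + E i) = w ℓ + 1 ∨ w (ℓ + E i) = w ℓ - 1 := by
  by_cases h : (DeltaBarI G.S ℓ i).Nonempty
  · exact Or.inl ((hw.2 ℓ hℓ i).1.mpr h)
  · exact Or.inr ((hw.2 ℓ hℓ i).2.mpr h)

lemma key_dual {r : ℕ} (G : GoodSemigroup r) (w : Pt r → ℤ) (hw : IsWeight G w)
    (p : Pt r) (hp : GLM w p) (ℓ : Pt r) (i : Fin r)
    (hℓ : 0 ≤ ℓ) (hle : ℓ + E i ≤ p)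
    (hup : w (ℓ + E i) = w ℓ + 1) :
    w (p - ℓ) = w (p - (ℓ + E i)) - 1 := by
  have hEnn := E_nonneg i
  have hℓle : ℓ ≤ p - E i := by
    intro j
    have h1 : ℓ j + E i j ≤ p j := by have := hle j; rwa [Pi.add_apply] at this
    simp only [Pi.sub_apply]; linarith
  have hm : (0 : Pt r) ≤ p - (ℓ + E i) := by
    intro j
    have h1 : ℓ j + E i j ≤ p j := by have := hle j; rwa [Pi.add_apply] at this
    simp only [Pi.sub_apply, Pi.add_apply, Pi.zero_apply]; linarith
  have hpE : (0 : Pt r) ≤ p - E i := le_trans hℓ hℓle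
  have hpi : 1 ≤ p i := by
    have h1 : ℓ i + E i i ≤ p i := by have := hle i; rwa [Pi.add_apply] at this
    have h0 : (0:ℤ) ≤ ℓ i := by simpa using hℓ i
    rw [E_apply_self] at h1; linarith
  -- DeltaBarI at ℓ is nonempty
  obtain ⟨s, hsS, hsi, hsj⟩ := (hw.2 ℓ hℓ i).1.mp hup
  -- show DeltaBarI at p - (ℓ + E i) is empty
  have hempty : ¬ (DeltaBarI G.S (p - (ℓ + E i)) i).Nonempty := by
    rintro ⟨u, huS, hui, huj⟩
    have hmem : s + u ∈ DeltaBarI G.S (p - E i) i := by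
      refine ⟨G.add_mem s hsS u huS, ?_, ?_⟩
      · simp [Pi.add_apply, Pi.sub_apply, hsi] at hui ⊢
        rw [hui]; ring
      · intro j hj
        have h1 := hsj j hj
        have h2 := huj j hj
        simp [Pi.add_apply, Pi.sub_apply, E_apply_ne hj] at h2 ⊢
        linarith
    have hup2 : w (p - E i + E i) = w (p - E i) + 1 :=
      (hw.2 (p - E i) hpE i).1.mpr ⟨s + u, hmem⟩
    rw [sub_add_cancel] at hup2
    have := hp.2 i hpi
    linarith
  have := (hw.2 (p - (ℓ + E i)) hm i).2.mpr hempty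
  have heq : p - (ℓ + E i) + E i = p - ℓ := by abel
  rw [heq] at this
  linarith


-- STATEMENT 8: path formula for the weight of a generalized local minimum;
-- in particular `w(p) ≤ 0`.
open Classical in
theorem stmt8 {r : ℕ} (G : GoodSemigroup r) (w : Pt r → ℤ) (hw : IsWeight G w)
    (p : Pt r) (hp : GLM w p)
    (t : ℕ) (x : ℕ → Pt r) (hx0 : x 0 = 0) (hxt : x t = p)
    (hstep : ∀ k < t, ∃ i : Fin r, x (k+1) = x k + E i) :
    w p = -(((Finset.range t).filter (fun k =>
        w (x (k+1)) = w (x k) - 1 ∧ w (p - x k) = w (p - x (k+1)) - 1)).card : ℤ) ∧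
    w p ≤ 0 := by
  classical
  have hEnn : ∀ i : Fin r, (0 : Pt r) ≤ E i := E_nonneg
  -- monotonicity of the path
  have hmono : ∀ m, m ≤ t → ∀ k, k ≤ m → x k ≤ x m := by
    intro m
    induction m with
    | zero => intro _ k hk; interval_cases k; exact le_refl _
    | succ n ih =>
      intro hn k hk
      rcases Nat.lt_succ_iff_lt_or_eq.mp (Nat.lt_succ_of_le hk) with h | h
      · obtain ⟨i, hi⟩ := hstep n (by omega)
        calc x k ≤ x n := ih (by omega) k (by omega)
          _ ≤ x (n+1) := by rw [hi]; exact le_add_of_nonneg_right (hEnn i)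
      · exact le_of_eq (by rw [h])
  have hnn : ∀ k, k ≤ t → (0 : Pt r) ≤ x k := by
    intro k hk; have := hmono k hk 0 (Nat.zero_le _); rwa [hx0] at this
  have hlep : ∀ k, k ≤ t → x k ≤ p := by
    intro k hk; have := hmono t le_rfl k hk; rwa [hxt] at this
  set cond : ℕ → Prop := fun k =>
    w (x (k+1)) = w (x k) - 1 ∧ w (p - x k) = w (p - x (k+1)) - 1 with hcond
  -- pointwise identity
  have hpoint : ∀ k ∈ Finset.range t,
      (w (x (k+1)) - w (x k)) + (w (p - x k) - w (p - x (k+1)))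
        = if cond k then (-2 : ℤ) else 0 := by
    intro k hk
    rw [Finset.mem_range] at hk
    obtain ⟨i, hi⟩ := hstep k hk
    have hxknn := hnn k (by omega)
    have hxk1p := hlep (k+1) (by omega)
    have hxk1nn : (0 : Pt r) ≤ p - x (k+1) := by
      intro j; have := hxk1p j; simp [Pi.sub_apply]; linarith
    have hdual : p - x k = (p - x (k+1)) + E i := by rw [hi]; abel
    have ha : w (x (k+1)) = w (x k) + 1 ∨ w (x (k+1)) = w (x k) - 1 := by
      rw [hi]; exact step_pm G w hw (x k) hxknn i
    have hb : w (p - x k) = w (p - x (k+1)) + 1 ∨ w (p - x k) = w (p - x (k+1)) - 1 := by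
      rw [hdual]; exact step_pm G w hw (p - x (k+1)) hxk1nn i
    rcases ha with ha | ha
    · -- up step forces dual down step
      have hkey : w (p - x k) = w (p - (x k + E i)) - 1 := by
        refine key_dual G w hw p hp (x k) i hxknn ?_ ?_
        · rw [← hi]; exact hxk1p
        · rw [← hi]; exact ha
      rw [← hi] at hkey
      rw [if_neg]
      · linarith
      · rintro ⟨h1, _⟩; linarith
    · rcases hb with hb | hb
      · rw [if_neg]
        · linarith
        · rintro ⟨_, h2⟩; linarith
      · rw [if_pos ⟨ha, hb⟩]; linarith
  have hA : ∑ k ∈ Finset.range t, (w (x (k+1)) - w (x k)) = w p := by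
    rw [Finset.sum_range_sub (fun k => w (x k))]
    rw [hx0, hxt, hw.1]; ring
  have hB : ∑ k ∈ Finset.range t, (w (p - x k) - w (p - x (k+1))) = w p := by
    rw [Finset.sum_range_sub' (fun k => w (p - x k))]
    rw [hx0, hxt, sub_zero, sub_self, hw.1]; ring
  have hsum : (2 : ℤ) * w p = ∑ k ∈ Finset.range t, (if cond k then (-2 : ℤ) else 0) := by
    rw [← Finset.sum_congr rfl hpoint, Finset.sum_add_distrib, hA, hB]; ring
  have hcount : ∑ k ∈ Finset.range t, (if cond k then (-2 : ℤ) else 0)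
      = -2 * (((Finset.range t).filter cond).card : ℤ) := by
    rw [Finset.sum_ite, Finset.sum_const, Finset.sum_const_zero, add_zero,
      nsmul_eq_mul]
    ring
  have hwp : w p = -(((Finset.range t).filter cond).card : ℤ) := by
    rw [hcount] at hsum; linarith
  refine ⟨hwp, ?_⟩
  rw [hwp]
  exact neg_nonpos.mpr (Int.natCast_nonneg _)
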